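/- Define y : ℝ² → ℂ³ by y(v,w) = ( (1/√5)·e^{−i(4√3/√10)v}, (1/√5)·e^{i((√3/√10)v − (3√2/2)w)}, (√3/√5)·e^{i((√3/√10)v + (√2/2)w)} ). Then for every (v,w): ‖y(v,w)‖ = 1, ⟨∂y/∂v, i·y⟩_ℝ = 0, and ⟨∂y/∂w, i·y⟩_ℝ = 0. Hence y is a Legendrian surface in the unit sphere S⁵ ⊂ ℂ³. -/

import Mathlib

open scoped ComplexInnerProductSpace

lemma term_re (c a : ℝ) (θ : ℂ) (hθ : (starRingEnd ℂ) θ = -θ) :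
    ((starRingEnd ℂ) (Complex.I * ↑a * ((c : ℂ) * Complex.exp θ)) *
      (Complex.I * ((c : ℂ) * Complex.exp θ))).re = a * c ^ 2 := by
  have h1 : Complex.exp (-θ) * Complex.exp θ = 1 := by
    rw [← Complex.exp_add]; simp
  have h2 : (starRingEnd ℂ) (Complex.I * ↑a * ((c : ℂ) * Complex.exp θ)) *
      (Complex.I * ((c : ℂ) * Complex.exp θ)) = ((a * c ^ 2 : ℝ) : ℂ) := by
    rw [map_mul, map_mul, map_mul, Complex.conj_I, Complex.conj_ofReal, Complex.conj_ofReal,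
      ← Complex.exp_conj, hθ]
    push_cast
    linear_combination (↑a * ↑c * ↑c * (-(Complex.I * Complex.I))) * h1 +
      (-(↑a * ↑c * ↑c)) * Complex.I_mul_I
  rw [h2, Complex.ofReal_re]

/-- the explicit surface y(v,w) is a Legendrian surface in S⁵ ⊂ ℂ³. -/
theorem stmt_11 (y : ℝ → ℝ → EuclideanSpace ℂ (Fin 3))
    (hy : ∀ v w : ℝ, y v w = (WithLp.equiv 2 (Fin 3 → ℂ)).symm
      ![((1/Real.sqrt 5 : ℝ) : ℂ)
          * Complex.exp (-Complex.I * ((4*Real.sqrt 3/Real.sqrt 10*v : ℝ) : ℂ)),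
        ((1/Real.sqrt 5 : ℝ) : ℂ)
          * Complex.exp (Complex.I * ((Real.sqrt 3/Real.sqrt 10*v - 3*Real.sqrt 2/2*w : ℝ) : ℂ)),
        ((Real.sqrt 3/Real.sqrt 5 : ℝ) : ℂ)
          * Complex.exp (Complex.I * ((Real.sqrt 3/Real.sqrt 10*v + Real.sqrt 2/2*w : ℝ) : ℂ))]) :
    ∀ v w : ℝ, ‖y v w‖ = 1 ∧
      (⟪deriv (fun t => y t w) v, Complex.I • y v w⟫).re = 0 ∧
      (⟪deriv (fun t => y v t) w, Complex.I • y v w⟫).re = 0 := by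
  intro v w
  set c0 : ℝ := 1/Real.sqrt 5 with hc0
  set c2 : ℝ := Real.sqrt 3/Real.sqrt 5 with hc2
  refine ⟨?_, ?_, ?_⟩
  · rw [hy, EuclideanSpace.norm_eq]
    simp [Fin.sum_univ_three, WithLp.equiv_symm_apply, PiLp.toLp_apply, map_mul,
      Complex.norm_exp, Complex.norm_real, hc0, hc2]
    rw [abs_of_nonneg (Real.sqrt_nonneg 3), abs_of_nonneg (Real.sqrt_nonneg 5), div_pow,
      Real.sq_sqrt (by norm_num : (0:ℝ) ≤ 3), Real.sq_sqrt (by norm_num : (0:ℝ) ≤ 5)]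
    norm_num
  · -- v derivative
    set a0 : ℝ := -(4*Real.sqrt 3/Real.sqrt 10) with ha0
    set a1 : ℝ := Real.sqrt 3/Real.sqrt 10 with ha1
    set E0 : ℂ := Complex.exp (-Complex.I * ((4*Real.sqrt 3/Real.sqrt 10*v : ℝ) : ℂ)) with hE0
    set E1 : ℂ := Complex.exp
      (Complex.I * ((Real.sqrt 3/Real.sqrt 10*v - 3*Real.sqrt 2/2*w : ℝ) : ℂ)) with hE1
    set E2 : ℂ := Complex.exp
      (Complex.I * ((Real.sqrt 3/Real.sqrt 10*v + Real.sqrt 2/2*w : ℝ) : ℂ)) with hE2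
    have h0 : HasDerivAt (fun t : ℝ => (c0:ℂ) *
        Complex.exp (-Complex.I * ((4*Real.sqrt 3/Real.sqrt 10*t : ℝ) : ℂ)))
        (Complex.I * (a0:ℂ) * ((c0:ℂ) * E0)) v := by
      have hg : HasDerivAt (fun t : ℝ =>
          -Complex.I * ((4*Real.sqrt 3/Real.sqrt 10*t : ℝ) : ℂ)) (Complex.I * (a0:ℂ)) v := by
        have := (((hasDerivAt_id v).const_mul
          (4*Real.sqrt 3/Real.sqrt 10)).ofReal_comp).const_mul (-Complex.I)
        refine this.congr_deriv ?_
        push_cast [ha0]; ring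
      have := (hg.cexp).const_mul (c0:ℂ)
      refine this.congr_deriv ?_
      rw [hE0]; ring
    have h1 : HasDerivAt (fun t : ℝ => (c0:ℂ) *
        Complex.exp (Complex.I * ((Real.sqrt 3/Real.sqrt 10*t - 3*Real.sqrt 2/2*w : ℝ) : ℂ)))
        (Complex.I * (a1:ℂ) * ((c0:ℂ) * E1)) v := by
      have hg : HasDerivAt (fun t : ℝ =>
          Complex.I * ((Real.sqrt 3/Real.sqrt 10*t - 3*Real.sqrt 2/2*w : ℝ) : ℂ))
          (Complex.I * (a1:ℂ)) v := by
        have := ((((hasDerivAt_id v).const_mul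
          (Real.sqrt 3/Real.sqrt 10)).sub_const (3*Real.sqrt 2/2*w)).ofReal_comp).const_mul
            Complex.I
        refine this.congr_deriv ?_
        push_cast [ha1]; ring
      have := (hg.cexp).const_mul (c0:ℂ)
      refine this.congr_deriv ?_
      rw [hE1]; ring
    have h2 : HasDerivAt (fun t : ℝ => (c2:ℂ) *
        Complex.exp (Complex.I * ((Real.sqrt 3/Real.sqrt 10*t + Real.sqrt 2/2*w : ℝ) : ℂ)))
        (Complex.I * (a1:ℂ) * ((c2:ℂ) * E2)) v := by
      have hg : HasDerivAt (fun t : ℝ =>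
          Complex.I * ((Real.sqrt 3/Real.sqrt 10*t + Real.sqrt 2/2*w : ℝ) : ℂ))
          (Complex.I * (a1:ℂ)) v := by
        have := ((((hasDerivAt_id v).const_mul
          (Real.sqrt 3/Real.sqrt 10)).add_const (Real.sqrt 2/2*w)).ofReal_comp).const_mul
            Complex.I
        refine this.congr_deriv ?_
        push_cast [ha1]; ring
      have := (hg.cexp).const_mul (c2:ℂ)
      refine this.congr_deriv ?_
      rw [hE2]; ring
    have hF : HasDerivAt (fun t : ℝ => (![(c0:ℂ) *
        Complex.exp (-Complex.I * ((4*Real.sqrt 3/Real.sqrt 10*t : ℝ) : ℂ)),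
        (c0:ℂ) * Complex.exp (Complex.I * ((Real.sqrt 3/Real.sqrt 10*t
            - 3*Real.sqrt 2/2*w : ℝ) : ℂ)),
        (c2:ℂ) * Complex.exp (Complex.I * ((Real.sqrt 3/Real.sqrt 10*t
            + Real.sqrt 2/2*w : ℝ) : ℂ))] : Fin 3 → ℂ))
        ![Complex.I * (a0:ℂ) * ((c0:ℂ) * E0), Complex.I * (a1:ℂ) * ((c0:ℂ) * E1),
          Complex.I * (a1:ℂ) * ((c2:ℂ) * E2)] v := by
      rw [hasDerivAt_pi]
      intro i
      fin_cases i
      · simpa using h0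
      · simpa using h1
      · simpa using h2
    have hD : HasDerivAt (fun t => y t w)
        ((WithLp.equiv 2 (Fin 3 → ℂ)).symm
          ![Complex.I * (a0:ℂ) * ((c0:ℂ) * E0), Complex.I * (a1:ℂ) * ((c0:ℂ) * E1),
            Complex.I * (a1:ℂ) * ((c2:ℂ) * E2)]) v := by
      have h := (((((EuclideanSpace.equiv (Fin 3) ℂ).symm : (Fin 3 → ℂ) →L[ℂ] EuclideanSpace ℂ (Fin 3)).restrictScalars ℝ).hasFDerivAt)).comp_hasDerivAt v hF
      have hfun : (fun t => y t w) = (⇑(((EuclideanSpace.equiv (Fin 3) ℂ).symm : (Fin 3 → ℂ) →L[ℂ] EuclideanSpace ℂ (Fin 3)).restrictScalars ℝ) ∘ fun t : ℝ =>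
          (![(c0:ℂ) * Complex.exp (-Complex.I * ((4*Real.sqrt 3/Real.sqrt 10*t : ℝ) : ℂ)),
          (c0:ℂ) * Complex.exp (Complex.I * ((Real.sqrt 3/Real.sqrt 10*t
              - 3*Real.sqrt 2/2*w : ℝ) : ℂ)),
          (c2:ℂ) * Complex.exp (Complex.I * ((Real.sqrt 3/Real.sqrt 10*t
              + Real.sqrt 2/2*w : ℝ) : ℂ))] : Fin 3 → ℂ)) := by
        funext t
        rw [hy t w]
        rfl
      rw [hfun]
      exact h
    rw [hD.deriv, hy]
    simp only [PiLp.inner_apply, Fin.sum_univ_three, RCLike.inner_apply',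
      WithLp.equiv_symm_apply, PiLp.toLp_apply, PiLp.smul_apply, smul_eq_mul, Matrix.cons_val_zero,
      Matrix.cons_val_one, Matrix.head_cons, Matrix.cons_val_two, Matrix.tail_cons,
      Complex.add_re]
    simp only [ha0, ha1, hc0, hc2, hE0, hE1, hE2]
    rw [term_re, term_re, term_re]
    · rw [div_pow, div_pow, one_pow, Real.sq_sqrt (by norm_num : (0:ℝ) ≤ 3),
        Real.sq_sqrt (by norm_num : (0:ℝ) ≤ 5)]
      ring
    · rw [map_mul, Complex.conj_I, Complex.conj_ofReal]; ring
    · rw [map_mul, Complex.conj_I, Complex.conj_ofReal]; ring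
    · rw [map_mul, map_neg, Complex.conj_I, Complex.conj_ofReal]; ring
  · -- w derivative
    set b1 : ℝ := -(3*Real.sqrt 2/2) with hb1
    set b2 : ℝ := Real.sqrt 2/2 with hb2
    set E1 : ℂ := Complex.exp
      (Complex.I * ((Real.sqrt 3/Real.sqrt 10*v - 3*Real.sqrt 2/2*w : ℝ) : ℂ)) with hE1
    set E2 : ℂ := Complex.exp
      (Complex.I * ((Real.sqrt 3/Real.sqrt 10*v + Real.sqrt 2/2*w : ℝ) : ℂ)) with hE2
    have h0 : HasDerivAt (fun _ : ℝ => (c0:ℂ) *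
        Complex.exp (-Complex.I * ((4*Real.sqrt 3/Real.sqrt 10*v : ℝ) : ℂ)))
        0 w := hasDerivAt_const _ _
    have h1 : HasDerivAt (fun t : ℝ => (c0:ℂ) *
        Complex.exp (Complex.I * ((Real.sqrt 3/Real.sqrt 10*v - 3*Real.sqrt 2/2*t : ℝ) : ℂ)))
        (Complex.I * (b1:ℂ) * ((c0:ℂ) * E1)) w := by
      have hg : HasDerivAt (fun t : ℝ =>
          Complex.I * ((Real.sqrt 3/Real.sqrt 10*v - 3*Real.sqrt 2/2*t : ℝ) : ℂ))
          (Complex.I * (b1:ℂ)) w := by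
        have := ((((hasDerivAt_id w).const_mul
          (3*Real.sqrt 2/2)).const_sub (Real.sqrt 3/Real.sqrt 10*v)).ofReal_comp).const_mul
            Complex.I
        refine this.congr_deriv ?_
        push_cast [hb1]; ring
      have := (hg.cexp).const_mul (c0:ℂ)
      refine this.congr_deriv ?_
      rw [hE1]; ring
    have h2 : HasDerivAt (fun t : ℝ => (c2:ℂ) *
        Complex.exp (Complex.I * ((Real.sqrt 3/Real.sqrt 10*v + Real.sqrt 2/2*t : ℝ) : ℂ)))
        (Complex.I * (b2:ℂ) * ((c2:ℂ) * E2)) w := by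
      have hg : HasDerivAt (fun t : ℝ =>
          Complex.I * ((Real.sqrt 3/Real.sqrt 10*v + Real.sqrt 2/2*t : ℝ) : ℂ))
          (Complex.I * (b2:ℂ)) w := by
        have := ((((hasDerivAt_id w).const_mul
          (Real.sqrt 2/2)).const_add (Real.sqrt 3/Real.sqrt 10*v)).ofReal_comp).const_mul
            Complex.I
        refine this.congr_deriv ?_
        push_cast [hb2]; ring
      have := (hg.cexp).const_mul (c2:ℂ)
      refine this.congr_deriv ?_
      rw [hE2]; ring
    have hF : HasDerivAt (fun t : ℝ => (![(c0:ℂ) *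
        Complex.exp (-Complex.I * ((4*Real.sqrt 3/Real.sqrt 10*v : ℝ) : ℂ)),
        (c0:ℂ) * Complex.exp (Complex.I * ((Real.sqrt 3/Real.sqrt 10*v
            - 3*Real.sqrt 2/2*t : ℝ) : ℂ)),
        (c2:ℂ) * Complex.exp (Complex.I * ((Real.sqrt 3/Real.sqrt 10*v
            + Real.sqrt 2/2*t : ℝ) : ℂ))] : Fin 3 → ℂ))
        ![0, Complex.I * (b1:ℂ) * ((c0:ℂ) * E1), Complex.I * (b2:ℂ) * ((c2:ℂ) * E2)] w := by
      rw [hasDerivAt_pi]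
      intro i
      fin_cases i
      · simpa using h0
      · simpa using h1
      · simpa using h2
    have hD : HasDerivAt (fun t => y v t)
        ((WithLp.equiv 2 (Fin 3 → ℂ)).symm
          ![0, Complex.I * (b1:ℂ) * ((c0:ℂ) * E1),
            Complex.I * (b2:ℂ) * ((c2:ℂ) * E2)]) w := by
      have h := ((((EuclideanSpace.equiv (Fin 3) ℂ).symm : (Fin 3 → ℂ) →L[ℂ] EuclideanSpace ℂ (Fin 3)).restrictScalars ℝ).hasFDerivAt).comp_hasDerivAt w hF
      have hfun : (fun t => y v t) = (⇑(((EuclideanSpace.equiv (Fin 3) ℂ).symm : (Fin 3 → ℂ) →L[ℂ] EuclideanSpace ℂ (Fin 3)).restrictScalars ℝ) ∘ fun t : ℝ =>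
          (![(c0:ℂ) * Complex.exp (-Complex.I * ((4*Real.sqrt 3/Real.sqrt 10*v : ℝ) : ℂ)),
          (c0:ℂ) * Complex.exp (Complex.I * ((Real.sqrt 3/Real.sqrt 10*v
              - 3*Real.sqrt 2/2*t : ℝ) : ℂ)),
          (c2:ℂ) * Complex.exp (Complex.I * ((Real.sqrt 3/Real.sqrt 10*v
              + Real.sqrt 2/2*t : ℝ) : ℂ))] : Fin 3 → ℂ)) := by
        funext t
        rw [hy v t]
        rfl
      rw [hfun]
      exact h
    rw [hD.deriv, hy]
    simp only [PiLp.inner_apply, Fin.sum_univ_three, RCLike.inner_apply',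
      WithLp.equiv_symm_apply, PiLp.toLp_apply, PiLp.smul_apply, smul_eq_mul, Matrix.cons_val_zero,
      Matrix.cons_val_one, Matrix.head_cons, Matrix.cons_val_two, Matrix.tail_cons,
      Complex.add_re, map_zero, zero_mul, Complex.zero_re, zero_add]
    simp only [hb1, hb2, hc0, hc2, hE1, hE2]
    rw [term_re, term_re]
    · rw [div_pow, div_pow, one_pow, Real.sq_sqrt (by norm_num : (0:ℝ) ≤ 3),
        Real.sq_sqrt (by norm_num : (0:ℝ) ≤ 5)]
      ring
    · rw [map_mul, Complex.conj_I, Complex.conj_ofReal]; ring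
    · rw [map_mul, Complex.conj_I, Complex.conj_ofReal]; ring
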